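/- The language {aⁿ b^(2n) : n ∈ ℕ} over the alphabet {a, b, a⁻¹, b⁻¹} is not a visibly pushdown language for any partition of the alphabet into call, internal, and response letters. -/

import Mathlib

inductive VKind | call | internal | response
deriving DecidableEq

/-- A (nondeterministic) visibly pushdown automaton over alphabet `A`
partitioned by `kind` into call, internal and response letters. -/
structure VPA (A : Type) (kind : A → VKind) where
  Q : Type
  Γ : Type
  [finQ : Fintype Q]
  [finΓ : Fintype Γ]
  init : Q
  accept : Set Q
  /-- transitions on call letters: push one symbol, do not inspect the stack -/
  δc : Q → A → Set (Q × Γ)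
  /-- transitions on internal letters: do not inspect or modify the stack -/
  δi : Q → A → Set Q
  /-- transitions on response letters: pop the topmost stack symbol -/
  δr : Q → A → Γ → Set Q
  /-- transitions on response letters read on the empty stack (bottom symbol) -/
  δb : Q → A → Set Q

namespace VPA

variable {A : Type} {kind : A → VKind}

inductive Steps (M : VPA A kind) : M.Q × List M.Γ → List A → M.Q × List M.Γ → Prop
  | nil (c) : Steps M c [] c
  | call {q s a q' γ w c} : kind a = .call → (q', γ) ∈ M.δc q a →
      Steps M (q', γ :: s) w c → Steps M (q, s) (a :: w) c
  | internal {q s a q' w c} : kind a = .internal → q' ∈ M.δi q a →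
      Steps M (q', s) w c → Steps M (q, s) (a :: w) c
  | pop {q γ s a q' w c} : kind a = .response → q' ∈ M.δr q a γ →
      Steps M (q', s) w c → Steps M (q, γ :: s) (a :: w) c
  | popEmpty {q a q' w c} : kind a = .response → q' ∈ M.δb q a →
      Steps M (q', []) w c → Steps M (q, []) (a :: w) c

/-- A VPA accepts a word if reading it from the initial state with empty stack
can end in an accepting state (with arbitrary stack contents). -/
def Accepts (M : VPA A kind) (w : List A) : Prop :=
  ∃ c : M.Q × List M.Γ, M.Steps (M.init, []) w c ∧ c.1 ∈ M.accept

end VPA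

/-- `L` is a visibly pushdown language over the partition `kind`. -/
def IsVPL {A : Type} (kind : A → VKind) (L : Set (List A)) : Prop :=
  ∃ M : VPA A kind, L = {w | M.Accepts w}

inductive F2L | a | b | ai | bi
deriving DecidableEq


namespace VPA

variable {A : Type} {kind : A → VKind} {M : VPA A kind}

theorem Steps.trans {c₁ c₂ c₃ : M.Q × List M.Γ} {u v : List A}
    (h : M.Steps c₁ u c₂) (h' : M.Steps c₂ v c₃) : M.Steps c₁ (u ++ v) c₃ := by
  induction h with
  | nil => exact h'
  | call h1 h2 _ ih => exact .call h1 h2 (ih h')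
  | internal h1 h2 _ ih => exact .internal h1 h2 (ih h')
  | pop h1 h2 _ ih => exact .pop h1 h2 (ih h')
  | popEmpty h1 h2 _ ih => exact .popEmpty h1 h2 (ih h')

theorem Steps.split {c₁ c₃ : M.Q × List M.Γ} {u v : List A}
    (h : M.Steps c₁ (u ++ v) c₃) : ∃ c₂, M.Steps c₁ u c₂ ∧ M.Steps c₂ v c₃ := by
  induction u generalizing c₁ with
  | nil => exact ⟨c₁, .nil _, h⟩
  | cons a u ih =>
    rw [List.cons_append] at h
    cases h with
    | call h1 h2 h3 =>
      obtain ⟨c₂, hs, hv⟩ := ih h3; exact ⟨c₂, .call h1 h2 hs, hv⟩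
    | internal h1 h2 h3 =>
      obtain ⟨c₂, hs, hv⟩ := ih h3; exact ⟨c₂, .internal h1 h2 hs, hv⟩
    | pop h1 h2 h3 =>
      obtain ⟨c₂, hs, hv⟩ := ih h3; exact ⟨c₂, .pop h1 h2 hs, hv⟩
    | popEmpty h1 h2 h3 =>
      obtain ⟨c₂, hs, hv⟩ := ih h3; exact ⟨c₂, .popEmpty h1 h2 hs, hv⟩

/-- With no call letters, a run from empty stack stays at empty stack. -/
theorem stack_empty {w : List A} (hw : ∀ x ∈ w, kind x ≠ VKind.call)
    {q : M.Q} {c : M.Q × List M.Γ} (h : M.Steps (q, []) w c) : c.2 = [] := by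
  induction w generalizing q with
  | nil => cases h; rfl
  | cons a w ih =>
    cases h with
    | call h1 h2 h3 => exact absurd h1 (hw a (List.mem_cons_self))
    | internal h1 h2 h3 => exact ih (fun x hx => hw x (List.mem_cons_of_mem _ hx)) h3
    | popEmpty h1 h2 h3 => exact ih (fun x hx => hw x (List.mem_cons_of_mem _ hx)) h3

/-- All-call words increase the stack by the length of the word. -/
theorem stack_call {w : List A} (hw : ∀ x ∈ w, kind x = VKind.call)
    {q : M.Q} {s : List M.Γ} {c : M.Q × List M.Γ} (h : M.Steps (q, s) w c) :
    c.2.length = w.length + s.length := by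
  induction w generalizing q s with
  | nil => cases h; simp
  | cons a w ih =>
    cases h with
    | call h1 h2 h3 =>
      have := ih (fun x hx => hw x (List.mem_cons_of_mem _ hx)) h3
      simp [this]; omega
    | internal h1 h2 h3 => simp [hw a (List.mem_cons_self)] at h1
    | pop h1 h2 h3 => simp [hw a (List.mem_cons_self)] at h1
    | popEmpty h1 h2 h3 => simp [hw a (List.mem_cons_self)] at h1

/-- All-response words drop the stack. -/
theorem stack_resp {w : List A} (hw : ∀ x ∈ w, kind x = VKind.response)
    {q : M.Q} {s : List M.Γ} {c : M.Q × List M.Γ} (h : M.Steps (q, s) w c) :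
    c.2 = s.drop w.length := by
  induction w generalizing q s with
  | nil => cases h; simp
  | cons a w ih =>
    cases h with
    | call h1 h2 h3 => simp [hw a (List.mem_cons_self)] at h1
    | internal h1 h2 h3 => simp [hw a (List.mem_cons_self)] at h1
    | pop h1 h2 h3 =>
      have := ih (fun x hx => hw x (List.mem_cons_of_mem _ hx)) h3
      simpa using this
    | popEmpty h1 h2 h3 =>
      have := ih (fun x hx => hw x (List.mem_cons_of_mem _ hx)) h3
      simp at this ⊢
      simp [this]

/-- Response-free runs are independent of the stack contents. -/
theorem steps_noresp {w : List A} (hw : ∀ x ∈ w, kind x ≠ VKind.response)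
    {q q' : M.Q} {s s' : List M.Γ} (h : M.Steps (q, s) w (q', s')) :
    ∃ t, s' = t ++ s ∧ ∀ s₂, M.Steps (q, s₂) w (q', t ++ s₂) := by
  induction w generalizing q s with
  | nil =>
    cases h
    exact ⟨[], rfl, fun s₂ => Steps.nil _⟩
  | cons a w ih =>
    cases h with
    | @call _ _ _ q1 γ _ _ h1 h2 h3 =>
      obtain ⟨t, rfl, ht⟩ := ih (fun x hx => hw x (List.mem_cons_of_mem _ hx)) h3
      refine ⟨t ++ [γ], by simp, fun s₂ => ?_⟩
      exact .call h1 h2 (by simpa using ht (γ :: s₂))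
    | internal h1 h2 h3 =>
      obtain ⟨t, rfl, ht⟩ := ih (fun x hx => hw x (List.mem_cons_of_mem _ hx)) h3
      exact ⟨t, rfl, fun s₂ => .internal h1 h2 (ht s₂)⟩
    | pop h1 h2 h3 => exact absurd h1 (hw a (List.mem_cons_self))
    | popEmpty h1 h2 h3 => exact absurd h1 (hw a (List.mem_cons_self))

theorem accepts_append_empty {u : List A}
    (hu : ∀ c, M.Steps (M.init, []) u c → c.2 = []) (w : List A) :
    M.Accepts (u ++ w) ↔ ∃ q, M.Steps (M.init, []) u (q, []) ∧
      ∃ c, M.Steps (q, []) w c ∧ c.1 ∈ M.accept := by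
  constructor
  · rintro ⟨c, h, hc⟩
    obtain ⟨⟨q, s⟩, h1, h2⟩ := h.split
    have hs : s = [] := hu _ h1
    subst hs
    exact ⟨q, h1, c, h2, hc⟩
  · rintro ⟨q, h1, c, h2, hc⟩
    exact ⟨c, h1.trans h2, hc⟩

theorem accepts_append_noresp {u w : List A} (hw : ∀ x ∈ w, kind x ≠ VKind.response) :
    M.Accepts (u ++ w) ↔ ∃ q, (∃ s, M.Steps (M.init, []) u (q, s)) ∧
      ∃ c, M.Steps (q, []) w c ∧ c.1 ∈ M.accept := by
  constructor
  · rintro ⟨⟨q', s'⟩, h, hc⟩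
    obtain ⟨⟨q, s⟩, h1, h2⟩ := h.split
    obtain ⟨t, rfl, ht⟩ := steps_noresp hw h2
    exact ⟨q, ⟨s, h1⟩, (q', t ++ []), ht [], hc⟩
  · rintro ⟨q, ⟨s, h1⟩, ⟨q', t⟩, h2, hc⟩
    obtain ⟨t', ht'eq, ht⟩ := steps_noresp hw h2
    exact ⟨(q', t' ++ s), h1.trans (ht s), hc⟩

theorem no_vpa {L : Set (List A)} (M : VPA A kind)
    (hL : L = {w | M.Accepts w}) (u v : ℕ → List A) (P : ℕ → Set M.Q)
    (hP : ∀ n m k, P n = P m → M.Accepts (u n ++ v k) → M.Accepts (u m ++ v k))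
    (hin : ∀ n, u n ++ v n ∈ L) (hout : ∀ n m, n ≠ m → u n ++ v m ∉ L) : False := by
  haveI := M.finQ
  obtain ⟨n, m, hnm, hPeq⟩ := Finite.exists_ne_map_eq_of_infinite P
  have h1 : M.Accepts (u n ++ v n) := by have := hin n; rwa [hL] at this
  have h2 : M.Accepts (u m ++ v n) := hP n m n hPeq h1
  refine hout m n (Ne.symm hnm) ?_
  rw [hL]; exact h2

end VPA

/-- The language {aⁿ b^(2n)} over the four-letter alphabet {a,b,a⁻¹,b⁻¹} is not
a visibly pushdown language for any partition of the alphabet. -/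
theorem anb2n_not_VPL :
    ∀ kind : F2L → VKind,
      ¬ IsVPL kind {w : List F2L |
        ∃ n : ℕ, w = List.replicate n F2L.a ++ List.replicate (2 * n) F2L.b} := by
  intro kind hVPL
  obtain ⟨M, hM⟩ := hVPL
  have hmem : ∀ n k : ℕ, (List.replicate n F2L.a ++ List.replicate k F2L.b ∈
      {w : List F2L | ∃ m : ℕ, w = List.replicate m F2L.a ++ List.replicate (2 * m) F2L.b})
      ↔ k = 2 * n := by
    intro n k
    constructor
    · rintro ⟨m, h⟩
      have ha := congrArg (List.count F2L.a) h
      have hb := congrArg (List.count F2L.b) h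
      simp [List.count_append, List.count_replicate] at ha hb
      omega
    · rintro rfl
      exact ⟨n, rfl⟩
  by_cases hak : kind F2L.a = VKind.call
  · by_cases hbk : kind F2L.b = VKind.response
    · -- a call, b response: use aⁿbⁿ, empty stack at the end
      have hu : ∀ k c, M.Steps (M.init, [])
          (List.replicate k F2L.a ++ List.replicate k F2L.b) c → c.2 = [] := by
        intro k c h
        obtain ⟨c₂, h1, h2⟩ := h.split
        have hlen : c₂.2.length = k := by
          have := VPA.stack_call
            (fun x hx => by rw [List.eq_of_mem_replicate hx]; exact hak) h1
          simpa using this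
        have hdrop := VPA.stack_resp
          (fun x hx => by rw [List.eq_of_mem_replicate hx]; exact hbk) h2
        rw [hdrop, List.length_replicate]
        exact List.drop_eq_nil_of_le (by omega)
      refine VPA.no_vpa M hM
        (fun n => List.replicate n F2L.a ++ List.replicate n F2L.b)
        (fun n => List.replicate n F2L.b)
        (fun n => {q | M.Steps (M.init, [])
          (List.replicate n F2L.a ++ List.replicate n F2L.b) (q, [])}) ?_ ?_ ?_
      · intro n m k hPeq hacc
        rw [VPA.accepts_append_empty (hu n) _] at hacc
        rw [VPA.accepts_append_empty (hu m) _]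
        obtain ⟨q, h1, hrest⟩ := hacc
        exact ⟨q, (Set.ext_iff.mp hPeq q).mp h1, hrest⟩
      · intro n
        refine ⟨n, ?_⟩
        rw [List.append_assoc, ← List.replicate_add, two_mul]
      · intro n m hnm hmem'
        rw [List.append_assoc, ← List.replicate_add] at hmem'
        rw [hmem n (n + m)] at hmem'
        omega
    · -- a call, b not response: acceptance of aⁿ·bᵏ depends only on the state set
      have hw : ∀ k, ∀ x ∈ List.replicate k F2L.b, kind x ≠ VKind.response := by
        intro k x hx
        rw [List.eq_of_mem_replicate hx]; exact hbk
      refine VPA.no_vpa M hM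
        (fun n => List.replicate n F2L.a)
        (fun n => List.replicate (2 * n) F2L.b)
        (fun n => {q | ∃ s, M.Steps (M.init, []) (List.replicate n F2L.a) (q, s)}) ?_ ?_ ?_
      · intro n m k hPeq hacc
        rw [VPA.accepts_append_noresp (hw (2 * k))] at hacc ⊢
        obtain ⟨q, h1, hrest⟩ := hacc
        exact ⟨q, (Set.ext_iff.mp hPeq q).mp h1, hrest⟩
      · intro n; exact ⟨n, rfl⟩
      · intro n m hnm hmem'
        rw [hmem n (2 * m)] at hmem'
        omega
  · -- a not call: stack stays empty while reading aⁿ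
    have hu : ∀ k c, M.Steps (M.init, []) (List.replicate k F2L.a) c → c.2 = [] := by
      intro k c h
      exact VPA.stack_empty
        (fun x hx => by rw [List.eq_of_mem_replicate hx]; exact hak) h
    refine VPA.no_vpa M hM
      (fun n => List.replicate n F2L.a)
      (fun n => List.replicate (2 * n) F2L.b)
      (fun n => {q | M.Steps (M.init, []) (List.replicate n F2L.a) (q, [])}) ?_ ?_ ?_
    · intro n m k hPeq hacc
      rw [VPA.accepts_append_empty (hu n) _] at hacc
      rw [VPA.accepts_append_empty (hu m) _]
      obtain ⟨q, h1, hrest⟩ := hacc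
      exact ⟨q, (Set.ext_iff.mp hPeq q).mp h1, hrest⟩
    · intro n; exact ⟨n, rfl⟩
    · intro n m hnm hmem'
      rw [hmem n (2 * m)] at hmem'
      omega
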